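/- Any solution of value d to the LP relaxation of the weak neighborhood-cover ILP on a graph G can be converted into a fractional weak r-neighborhood cover of G with degree at most d+1 and spread s. Concretely: given reals 0 ≤ p_{vw}, q_{uw} ≤ 1 for u,v,w ∈ V(G) satisfying (1) Σ_{w : N_r[v] ⊆ N_s[w]} p_{vw} ≥ 1 for all v; (2) Σ_w q_{uw} ≤ d for all u; (3) q_{uw} ≥ p_{vw} for all v,w and all u ∈ N_r[v]; (4) q_{uw} = 0 whenever u ∉ N_s[w]; there exists a fractional weak r-neighborhood cover of G with degree d+1 and spread s whose clusters are the level sets X_w^i = {u : ⌈n·q_{uw}⌉ ≥ i} for w ∈ V(G), i ∈ [n], each with weight 1/n, where n = |V(G)|. -/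

import Mathlib

open scoped Classical

variable {V : Type*}

/-- `x` lies in the closed `r`-ball around `c` in `G`. -/
def inBall (G : SimpleGraph V) (c : V) (r : ℕ) (x : V) : Prop :=
  ∃ p : G.Walk c x, p.length ≤ r

/-- A fractional weak `r`-neighborhood cover of `G` with degree `d` and spread
`s`, given as an indexed family of clusters `X` with weights `f`. -/
def IsFracWeakCover (G : SimpleGraph V) [Fintype V] (r s : ℕ) (d : ℝ)
    {I : Type*} [Fintype I] (X : I → Set V) (f : I → ℝ) : Prop :=
  (∀ i, 0 ≤ f i ∧ f i ≤ 1) ∧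
  -- every cluster is a subset of an s-neighborhood
  (∀ i, ∃ c, ∀ x ∈ X i, inBall G c s x) ∧
  -- the weights of clusters containing N_r[v] sum to at least 1
  (∀ v : V, 1 ≤ ∑ i ∈ Finset.univ.filter
      (fun i => ∀ x, inBall G v r x → x ∈ X i), f i) ∧
  -- the weights of clusters containing v sum to at most d
  (∀ v : V, ∑ i ∈ Finset.univ.filter (fun i => v ∈ X i), f i ≤ d)

lemma sum_ite_fin_lt (n m : ℕ) (c : ℝ) :
    ∑ k : Fin n, (if (k : ℕ) < m then c else 0) = (min m n : ℕ) * c := by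
  rw [Fin.sum_univ_eq_sum_range (fun i => if i < m then c else 0), ← Finset.sum_filter]
  have h : (Finset.range n).filter (fun i => i < m) = Finset.range (min m n) := by
    ext i
    simp only [Finset.mem_filter, Finset.mem_range, Nat.lt_min]
    tauto
  rw [h, Finset.sum_const, Finset.card_range, nsmul_eq_mul]

set_option maxHeartbeats 2000000 in
/-- Any solution of value `d` to the LP relaxation of the weak neighborhood
cover ILP yields a fractional weak `r`-neighborhood cover with degree `d + 1`
and spread `s`, whose clusters are the level sets
`X_w^i = {u : ⌈n·q_{uw}⌉ ≥ i}`, each with weight `1/n`. -/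
theorem fracWeakCover_of_LP [Fintype V] (G : SimpleGraph V) (r s : ℕ) (d : ℝ)
    (p q : V → V → ℝ)
    (hp : ∀ v w, 0 ≤ p v w ∧ p v w ≤ 1) (hq : ∀ u w, 0 ≤ q u w ∧ q u w ≤ 1)
    -- (1)
    (h1 : ∀ v : V, 1 ≤ ∑ w ∈ Finset.univ.filter
      (fun w => ∀ x, inBall G v r x → inBall G w s x), p v w)
    -- (2)
    (h2 : ∀ u : V, ∑ w, q u w ≤ d)
    -- (3)
    (h3 : ∀ v w u : V, inBall G v r u → p v w ≤ q u w)
    -- (4)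
    (h4 : ∀ u w : V, ¬ inBall G w s u → q u w = 0) :
    IsFracWeakCover G r s (d + 1)
      (fun wi : V × Fin (Fintype.card V) =>
        {u : V | (wi.2 : ℕ) + 1 ≤ ⌈(Fintype.card V : ℝ) * q u wi.1⌉₊})
      (fun _ => 1 / (Fintype.card V : ℝ)) := by
  set n := Fintype.card V with hn
  refine ⟨?_, ?_, ?_, ?_⟩
  · intro i
    have : Nonempty V := ⟨i.1⟩
    have hn1 : (1 : ℝ) ≤ (n : ℝ) := by
      exact_mod_cast Nat.one_le_iff_ne_zero.mpr (Fintype.card_ne_zero)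
    constructor
    · positivity
    · rw [div_le_one (by linarith)]; linarith
  · intro i
    refine ⟨i.1, fun x hx => ?_⟩
    by_contra hb
    have := h4 x i.1 hb
    simp only [Set.mem_setOf_eq, this, mul_zero, Nat.ceil_zero] at hx
    omega
  · intro v
    have : Nonempty V := ⟨v⟩
    have hn0 : 0 < n := Fintype.card_pos
    have hnR : (0 : ℝ) < (n : ℝ) := by exact_mod_cast hn0
    rw [Finset.sum_filter, Fintype.sum_prod_type]
    simp only [Set.mem_setOf_eq]
    have key : ∀ w : V, p v w ≤
        ∑ k : Fin n, (if (∀ x, inBall G v r x →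
          (k : ℕ) + 1 ≤ ⌈(n : ℝ) * q x w⌉₊) then 1 / (n : ℝ) else 0) := by
      intro w
      have hstep : ∑ k : Fin n, (if (k : ℕ) < ⌈(n : ℝ) * p v w⌉₊ then 1 / (n : ℝ) else 0) ≤
          ∑ k : Fin n, (if (∀ x, inBall G v r x →
            (k : ℕ) + 1 ≤ ⌈(n : ℝ) * q x w⌉₊) then 1 / (n : ℝ) else 0) := by
        apply Finset.sum_le_sum
        intro k _
        split_ifs with hA hB hB
        · exact le_refl _
        · exact absurd (fun x hx => by
            have : ⌈(n : ℝ) * p v w⌉₊ ≤ ⌈(n : ℝ) * q x w⌉₊ :=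
              Nat.ceil_le_ceil (by
                have := h3 v w x hx
                nlinarith)
            omega) hB
        · positivity
        · exact le_refl _
      refine le_trans ?_ hstep
      rw [sum_ite_fin_lt]
      have hle : ⌈(n : ℝ) * p v w⌉₊ ≤ n := by
        apply Nat.ceil_le.mpr
        have := (hp v w).2
        nlinarith
      rw [min_eq_left hle]
      have h1' : (n : ℝ) * p v w ≤ (⌈(n : ℝ) * p v w⌉₊ : ℕ) := Nat.le_ceil _
      rw [mul_one_div, le_div_iff₀ hnR]
      linarith
    have hS : (1 : ℝ) ≤ ∑ w : V, ∑ k : Fin n, (if (∀ x, inBall G v r x →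
        (k : ℕ) + 1 ≤ ⌈(n : ℝ) * q x w⌉₊) then 1 / (n : ℝ) else 0) :=
      calc (1 : ℝ) ≤ ∑ w ∈ Finset.univ.filter
            (fun w => ∀ x, inBall G v r x → inBall G w s x), p v w := h1 v
        _ ≤ ∑ w, p v w := Finset.sum_le_sum_of_subset_of_nonneg
              (Finset.filter_subset _ _) (fun w _ _ => (hp v w).1)
        _ ≤ _ := Finset.sum_le_sum (fun w _ => key w)
    convert hS using 10
  · intro u
    have : Nonempty V := ⟨u⟩
    have hn0 : 0 < n := Fintype.card_pos
    have hnR : (0 : ℝ) < (n : ℝ) := by exact_mod_cast hn0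
    rw [Finset.sum_filter, Fintype.sum_prod_type]
    simp only [Set.mem_setOf_eq]
    have key : ∀ w : V, ∑ k : Fin n,
        (if (k : ℕ) + 1 ≤ ⌈(n : ℝ) * q u w⌉₊ then 1 / (n : ℝ) else 0)
        ≤ q u w + 1 / (n : ℝ) := by
      intro w
      have heq : ∀ k : Fin n,
          (if (k : ℕ) + 1 ≤ ⌈(n : ℝ) * q u w⌉₊ then 1 / (n : ℝ) else 0)
          = (if (k : ℕ) < ⌈(n : ℝ) * q u w⌉₊ then 1 / (n : ℝ) else 0) :=
        fun k => if_congr (by omega) rfl rfl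
      rw [Finset.sum_congr rfl (fun k _ => heq k), sum_ite_fin_lt]
      have h1' : ((min ⌈(n : ℝ) * q u w⌉₊ n : ℕ) : ℝ) ≤ (n : ℝ) * q u w + 1 := by
        have hmin : ((min ⌈(n : ℝ) * q u w⌉₊ n : ℕ) : ℝ) ≤ (⌈(n : ℝ) * q u w⌉₊ : ℕ) := by
          exact_mod_cast min_le_left _ _
        have hc : (⌈(n : ℝ) * q u w⌉₊ : ℝ) < (n : ℝ) * q u w + 1 := by
          apply Nat.ceil_lt_add_one
          have := (hq u w).1
          positivity
        linarith
      have hmul : ((min ⌈(n : ℝ) * q u w⌉₊ n : ℕ) : ℝ) * (1 / (n : ℝ)) ≤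
          ((n : ℝ) * q u w + 1) * (1 / (n : ℝ)) :=
        mul_le_mul_of_nonneg_right h1' (by positivity)
      have he : ((n : ℝ) * q u w + 1) * (1 / (n : ℝ)) = q u w + 1 / (n : ℝ) := by
        field_simp
      linarith
    have hS : ∑ w : V, ∑ k : Fin n,
        (if (k : ℕ) + 1 ≤ ⌈(n : ℝ) * q u w⌉₊ then 1 / (n : ℝ) else 0) ≤ d + 1 :=
      calc ∑ w : V, ∑ k : Fin n,
          (if (k : ℕ) + 1 ≤ ⌈(n : ℝ) * q u w⌉₊ then 1 / (n : ℝ) else 0)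
          ≤ ∑ w, (q u w + 1 / (n : ℝ)) := Finset.sum_le_sum (fun w _ => key w)
        _ = (∑ w, q u w) + n * (1 / (n : ℝ)) := by
            rw [Finset.sum_add_distrib, Finset.sum_const, Finset.card_univ, nsmul_eq_mul, hn]
        _ ≤ d + 1 := by
            rw [mul_one_div, div_self (ne_of_gt hnR)]
            exact add_le_add_left (h2 u) 1
    convert hS using 10
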